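/- arXiv:1302.3785 — 3 statements merged into one kernel-verified Lean document; each statement's English description precedes it below -/
import Mathlib

section
/- The integral over the plane of the product of two translated, rotated, anisotropically scaled Gaussian atoms φ_{γ_j}(X) = exp(-(σ_j^{-1}Ψ_j^{-1}(X-τ_j))^T(σ_j^{-1}Ψ_j^{-1}(X-τ_j))) and φ_{γ_k}(X) (defined analogously) equals (π|σ_j σ_k| / (2 √|Σ_{jk}|)) · exp(-(1/2)(τ_k-τ_j)^T Σ_{jk}^{-1} (τ_k-τ_j)), where Σ_{jk} = (1/2)(Ψ_j σ_j² Ψ_j^{-1} + Ψ_k σ_k² Ψ_k^{-1}). -/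
open MeasureTheory Real Matrix

/-- Rotation matrix with angle ψ. -/
noncomputable def rotM (ψ : ℝ) : Matrix (Fin 2) (Fin 2) ℝ :=
  !![Real.cos ψ, -Real.sin ψ; Real.sin ψ, Real.cos ψ]

/-- Diagonal anisotropic scaling matrix. -/
noncomputable def sclM (sx sy : ℝ) : Matrix (Fin 2) (Fin 2) ℝ :=
  !![sx, 0; 0, sy]

/-- Gaussian atom φ_γ(X) = exp(-(σ⁻¹Ψ⁻¹(X-τ))ᵀ(σ⁻¹Ψ⁻¹(X-τ))). -/
noncomputable def gAtom (Ψ σ : Matrix (Fin 2) (Fin 2) ℝ) (τ : Fin 2 → ℝ)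
    (X : Fin 2 → ℝ) : ℝ :=
  Real.exp (-((σ⁻¹ * Ψ⁻¹).mulVec (X - τ) ⬝ᵥ (σ⁻¹ * Ψ⁻¹).mulVec (X - τ)))

lemma integrable1D {a : ℝ} (ha : 0 < a) (p r : ℝ) :
    Integrable (fun x : ℝ => Real.exp (-(a * x ^ 2 + p * x + r))) := by
  have h : ∀ x : ℝ, -(a * x ^ 2 + p * x + r)
      = -a * (x + p / (2 * a)) ^ 2 + (p ^ 2 / (4 * a) - r) := by
    intro x; field_simp; ring
  simp_rw [h, Real.exp_add]
  exact (((integrable_exp_neg_mul_sq ha).comp_add_right (p / (2 * a)))).mul_const _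

lemma int1D {a : ℝ} (ha : 0 < a) (p r : ℝ) :
    (∫ x : ℝ, Real.exp (-(a * x ^ 2 + p * x + r)))
      = Real.sqrt (π / a) * Real.exp (p ^ 2 / (4 * a) - r) := by
  have h : ∀ x : ℝ, -(a * x ^ 2 + p * x + r)
      = -a * (x + p / (2 * a)) ^ 2 + (p ^ 2 / (4 * a) - r) := by
    intro x; field_simp; ring
  simp_rw [h, Real.exp_add]
  rw [integral_mul_const, integral_add_right_eq_self (fun x : ℝ => Real.exp (-a * x ^ 2)),
    integral_gaussian]

lemma core2D {a b c : ℝ} (ha : 0 < a) (hD : 0 < a * c - b ^ 2) (p q r : ℝ) :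
    (∫ X : Fin 2 → ℝ, Real.exp (-(a * X 0 ^ 2 + 2 * b * X 0 * X 1 + c * X 1 ^ 2
        + p * X 0 + q * X 1 + r)))
      = π / Real.sqrt (a * c - b ^ 2)
        * Real.exp ((c * p ^ 2 - 2 * b * p * q + a * q ^ 2) / (4 * (a * c - b ^ 2)) - r) := by
  have hc : 0 < c := by nlinarith [sq_nonneg b]
  have hDc : 0 < (a * c - b ^ 2) / c := div_pos hD hc
  have hmp := (volume_preserving_finTwoArrow ℝ).symm
  rw [← hmp.integral_comp (MeasurableEquiv.finTwoArrow (α := ℝ)).symm.measurableEmbedding]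
  have hform : ∀ z : ℝ × ℝ,
      Real.exp (-(a * (MeasurableEquiv.finTwoArrow (α := ℝ)).symm z 0 ^ 2
        + 2 * b * (MeasurableEquiv.finTwoArrow (α := ℝ)).symm z 0 *
          (MeasurableEquiv.finTwoArrow (α := ℝ)).symm z 1
        + c * (MeasurableEquiv.finTwoArrow (α := ℝ)).symm z 1 ^ 2
        + p * (MeasurableEquiv.finTwoArrow (α := ℝ)).symm z 0
        + q * (MeasurableEquiv.finTwoArrow (α := ℝ)).symm z 1 + r))
      = Real.exp (-(a * z.1 ^ 2 + 2 * b * z.1 * z.2 + c * z.2 ^ 2 + p * z.1 + q * z.2 + r)) := by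
    intro z; simp [MeasurableEquiv.finTwoArrow]
  simp_rw [hform]
  have hxy : ∀ x y : ℝ, (-(a * x ^ 2 + 2 * b * x * y + c * y ^ 2 + p * x + q * y + r))
      = -(c * y ^ 2 + (2 * b * x + q) * y + (a * x ^ 2 + p * x + r)) := by intro x y; ring
  have hsec : ∀ x : ℝ,
      (∫ y : ℝ, Real.exp (-(a * x ^ 2 + 2 * b * x * y + c * y ^ 2 + p * x + q * y + r)))
      = Real.sqrt (π / c) * Real.exp (-((a * c - b ^ 2) / c * x ^ 2
          + (p - b * q / c) * x + (r - q ^ 2 / (4 * c)))) := by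
    intro x
    simp_rw [hxy x]
    rw [int1D hc]
    congr 1
    field_simp
    ring
  have hmeas : AEStronglyMeasurable
      (fun z : ℝ × ℝ => Real.exp (-(a * z.1 ^ 2 + 2 * b * z.1 * z.2 + c * z.2 ^ 2
        + p * z.1 + q * z.2 + r))) ((volume : Measure ℝ).prod volume) := by
    apply Continuous.aestronglyMeasurable; fun_prop
  have hint : Integrable
      (fun z : ℝ × ℝ => Real.exp (-(a * z.1 ^ 2 + 2 * b * z.1 * z.2 + c * z.2 ^ 2
        + p * z.1 + q * z.2 + r))) ((volume : Measure ℝ).prod volume) := by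
    refine (integrable_prod_iff hmeas).mpr ⟨?_, ?_⟩
    · refine Filter.Eventually.of_forall fun x => ?_
      simp_rw [hxy x]
      exact integrable1D hc _ _
    · simp_rw [Real.norm_eq_abs, abs_of_pos (Real.exp_pos _), hsec]
      exact (integrable1D hDc _ _).const_mul _
  rw [show ((volume : Measure (ℝ × ℝ))) = (volume : Measure ℝ).prod volume
      from Measure.volume_eq_prod ℝ ℝ, integral_prod _ hint]
  simp_rw [hsec]
  rw [integral_const_mul, int1D hDc]
  rw [← mul_assoc, ← Real.sqrt_mul (le_of_lt (div_pos pi_pos hc))]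
  have h1 : π / c * (π / ((a * c - b ^ 2) / c)) = π ^ 2 / (a * c - b ^ 2) := by
    field_simp
  rw [h1, Real.sqrt_div (sq_nonneg π), Real.sqrt_sq pi_pos.le]
  congr 1
  have hD' : a * c - b ^ 2 ≠ 0 := ne_of_gt hD
  have hc' : c ≠ 0 := ne_of_gt hc
  have hD'' : c * a - b ^ 2 ≠ 0 := by rw [mul_comm]; exact hD'
  congr 1
  field_simp
  ring

lemma galg1 (aj bj cj ak bk ck wj wk : ℝ)
    (hj : (aj*cj - bj^2)*wj = 1) (hk : (ak*ck - bk^2)*wk = 1) :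
    ((aj+ak)*(cj+ck) - (bj+bk)^2) * (wj*wk)
      = 4*(((cj*wj+ck*wk)/2)*((aj*wj+ak*wk)/2) - ((-(bj*wj+bk*wk))/2)^2) := by
  linear_combination (wk - wj)*hj + (wj - wk)*hk

lemma galgL (aj bj cj ak bk ck t0 t1 u0 u1 : ℝ)
    (hD : ((aj+ak)*(cj+ck) - (bj+bk)^2) ≠ 0) :
    (((cj+ck)*(-2*(aj*t0 + bj*t1 + ak*u0 + bk*u1))^2
      - 2*(bj+bk)*(-2*(aj*t0 + bj*t1 + ak*u0 + bk*u1))*(-2*(bj*t0 + cj*t1 + bk*u0 + ck*u1))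
      + (aj+ak)*(-2*(bj*t0 + cj*t1 + bk*u0 + ck*u1))^2)
        / (4*((aj+ak)*(cj+ck) - (bj+bk)^2))
      - (aj*t0^2 + 2*bj*t0*t1 + cj*t1^2 + ak*u0^2 + 2*bk*u0*u1 + ck*u1^2))
    = -((aj*(u0-t0)^2 + 2*bj*(u0-t0)*(u1-t1) + cj*(u1-t1)^2)*(ak*ck - bk^2)
        + (ak*(u0-t0)^2 + 2*bk*(u0-t0)*(u1-t1) + ck*(u1-t1)^2)*(aj*cj - bj^2))
      / ((aj+ak)*(cj+ck) - (bj+bk)^2) := by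
  rw [div_sub' (by intro h; apply hD; linarith),
    div_eq_div_iff (by intro h; apply hD; linarith) hD]
  ring

set_option maxHeartbeats 2000000 in
lemma galgR (aj bj cj ak bk ck wj wk d0 d1 : ℝ)
    (hj : (aj*cj - bj^2)*wj = 1) (hk : (ak*ck - bk^2)*wk = 1)
    (hD : ((aj+ak)*(cj+ck) - (bj+bk)^2) ≠ 0) :
    -(1/2)*((((aj*wj+ak*wk)/2)*d0^2
        - 2*((-(bj*wj+bk*wk))/2)*d0*d1
        + ((cj*wj+ck*wk)/2)*d1^2)
      / (((cj*wj+ck*wk)/2)*((aj*wj+ak*wk)/2) - ((-(bj*wj+bk*wk))/2)^2))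
    = -((aj*d0^2 + 2*bj*d0*d1 + cj*d1^2)*(ak*ck - bk^2)
        + (ak*d0^2 + 2*bk*d0*d1 + ck*d1^2)*(aj*cj - bj^2))
      / ((aj+ak)*(cj+ck) - (bj+bk)^2) := by
  have hdj : aj*cj - bj^2 ≠ 0 := by intro h; rw [h, zero_mul] at hj; exact one_ne_zero hj.symm
  have hdk : ak*ck - bk^2 ≠ 0 := by intro h; rw [h, zero_mul] at hk; exact one_ne_zero hk.symm
  have hwj : wj = (aj*cj - bj^2)⁻¹ := by
    field_simp
    linarith [hj]
  have hwk : wk = (ak*ck - bk^2)⁻¹ := by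
    field_simp
    linarith [hk]
  have hwj0 : wj ≠ 0 := by intro h; rw [h, mul_zero] at hj; exact one_ne_zero hj.symm
  have hwk0 : wk ≠ 0 := by intro h; rw [h, mul_zero] at hk; exact one_ne_zero hk.symm
  have hdetS : (((cj*wj+ck*wk)/2)*((aj*wj+ak*wk)/2) - ((-(bj*wj+bk*wk))/2)^2) ≠ 0 := by
    have h1 := galg1 aj bj cj ak bk ck wj wk hj hk
    intro h; rw [h] at h1
    simp only [mul_eq_zero, mul_zero] at h1
    rcases h1 with h1|h1|h1
    · exact hD h1
    · exact hwj0 h1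
    · exact hwk0 h1
  subst hwj; subst hwk
  rw [mul_div_assoc', div_eq_div_iff hdetS hD]
  field_simp
  ring

lemma rotM_inv (ψ : ℝ) :
    (rotM ψ)⁻¹ = !![Real.cos ψ, Real.sin ψ; -Real.sin ψ, Real.cos ψ] := by
  apply Matrix.inv_eq_left_inv
  rw [rotM, Matrix.mul_fin_two]
  have h := sin_sq_add_cos_sq ψ
  ext i j
  fin_cases i <;> fin_cases j <;> simp [Matrix.one_apply] <;> nlinarith [h]

lemma sclM_inv {sx sy : ℝ} (hx : sx ≠ 0) (hy : sy ≠ 0) :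
    (sclM sx sy)⁻¹ = !![sx⁻¹, 0; 0, sy⁻¹] := by
  apply Matrix.inv_eq_left_inv
  rw [sclM, Matrix.mul_fin_two]
  ext i j
  fin_cases i <;> fin_cases j <;> simp [Matrix.one_apply] <;> field_simp

lemma gAtom_eq (ψ : ℝ) {sx sy : ℝ} (hx : sx ≠ 0) (hy : sy ≠ 0) (τ X : Fin 2 → ℝ) :
    gAtom (rotM ψ) (sclM sx sy) τ X
      = Real.exp (-(((Real.cos ψ * (X 0 - τ 0) + Real.sin ψ * (X 1 - τ 1)) / sx) ^ 2
          + ((-Real.sin ψ * (X 0 - τ 0) + Real.cos ψ * (X 1 - τ 1)) / sy) ^ 2)) := by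
  rw [gAtom, rotM_inv, sclM_inv hx hy]
  congr 1
  rw [Matrix.mul_fin_two]
  simp [Matrix.mulVec, dotProduct, Fin.sum_univ_two]
  ring

lemma trig_d (ψ : ℝ) {sx sy : ℝ} (hx : sx ≠ 0) (hy : sy ≠ 0) :
    ((Real.cos ψ ^ 2 / sx ^ 2 + Real.sin ψ ^ 2 / sy ^ 2)
        * (Real.sin ψ ^ 2 / sx ^ 2 + Real.cos ψ ^ 2 / sy ^ 2)
      - (Real.cos ψ * Real.sin ψ * (1 / sx ^ 2 - 1 / sy ^ 2)) ^ 2) * (sx ^ 2 * sy ^ 2) = 1 := by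
  have h := sin_sq_add_cos_sq ψ
  field_simp
  linear_combination (sin ψ ^ 2 + cos ψ ^ 2 + 1) * (sx^2 * sy^2) * h

lemma apos (ψ : ℝ) {sx sy : ℝ} (hx : 0 < sx) (hy : 0 < sy) :
    0 < Real.cos ψ ^ 2 / sx ^ 2 + Real.sin ψ ^ 2 / sy ^ 2 := by
  rcases eq_or_ne (Real.cos ψ) 0 with h|h
  · have h1 : Real.sin ψ ^ 2 = 1 := by
      have := sin_sq_add_cos_sq ψ; rw [h] at this; simpa using this
    rw [h, h1]; positivity
  · have h1 : 0 < Real.cos ψ ^ 2 / sx ^ 2 := by positivity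
    have h2 : 0 ≤ Real.sin ψ ^ 2 / sy ^ 2 := by positivity
    linarith

lemma sumPD {aj bj cj ak bk ck : ℝ} (haj : 0 < aj) (hdj : 0 < aj*cj - bj^2)
    (hak : 0 < ak) (hdk : 0 < ak*ck - bk^2) :
    0 < (aj+ak)*(cj+ck) - (bj+bk)^2 := by
  nlinarith [sq_nonneg (aj*bk - ak*bj), mul_pos haj hak, mul_pos hdj hak, mul_pos hdk haj,
    mul_pos (mul_pos haj hak) hdj, mul_pos (mul_pos haj hak) hdk]

lemma quadgen (e00 e01 e11 : ℝ) (h : e00*e11 - e01^2 ≠ 0) (v : Fin 2 → ℝ) :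
    v ⬝ᵥ (!![e00,e01;e01,e11])⁻¹.mulVec v
    = (e11*(v 0)^2 - 2*e01*(v 0)*(v 1) + e00*(v 1)^2)/(e00*e11-e01^2) := by
  have hd : (!![e00,e01;e01,e11] : Matrix (Fin 2) (Fin 2) ℝ).det = e00*e11 - e01^2 := by
    rw [Matrix.det_fin_two_of]; ring
  rw [Matrix.inv_def, Matrix.adjugate_fin_two_of, hd]
  simp [Matrix.mulVec, dotProduct, Fin.sum_univ_two, Ring.inverse_eq_inv']
  field_simp
  ring

lemma Sexp (ψj ψk sxj syj sxk syk : ℝ) :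
    (1/2 : ℝ) • (rotM ψj * (sclM sxj syj) ^ 2 * (rotM ψj)⁻¹
        + rotM ψk * (sclM sxk syk) ^ 2 * (rotM ψk)⁻¹)
    = !![(Real.cos ψj ^ 2 * sxj ^ 2 + Real.sin ψj ^ 2 * syj ^ 2
          + Real.cos ψk ^ 2 * sxk ^ 2 + Real.sin ψk ^ 2 * syk ^ 2) / 2,
         (Real.cos ψj * Real.sin ψj * (sxj ^ 2 - syj ^ 2)
          + Real.cos ψk * Real.sin ψk * (sxk ^ 2 - syk ^ 2)) / 2;
         (Real.cos ψj * Real.sin ψj * (sxj ^ 2 - syj ^ 2)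
          + Real.cos ψk * Real.sin ψk * (sxk ^ 2 - syk ^ 2)) / 2,
         (Real.sin ψj ^ 2 * sxj ^ 2 + Real.cos ψj ^ 2 * syj ^ 2
          + Real.sin ψk ^ 2 * sxk ^ 2 + Real.cos ψk ^ 2 * syk ^ 2) / 2] := by
  rw [rotM_inv, rotM_inv, rotM, rotM, sclM, sclM, pow_two, pow_two,
    Matrix.mul_fin_two, Matrix.mul_fin_two, Matrix.mul_fin_two, Matrix.mul_fin_two,
    Matrix.mul_fin_two, Matrix.mul_fin_two]
  ext i j
  fin_cases i <;> fin_cases j <;> simp <;> ring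

set_option maxHeartbeats 2000000 in
theorem stmt0 (ψj ψk sxj syj sxk syk : ℝ) (τj τk : Fin 2 → ℝ)
    (hxj : 0 < sxj) (hyj : 0 < syj) (hxk : 0 < sxk) (hyk : 0 < syk)
    (Sjk : Matrix (Fin 2) (Fin 2) ℝ)
    (hS : Sjk = (1/2 : ℝ) •
      (rotM ψj * (sclM sxj syj) ^ 2 * (rotM ψj)⁻¹
        + rotM ψk * (sclM sxk syk) ^ 2 * (rotM ψk)⁻¹)) :
    (∫ X : Fin 2 → ℝ,
        gAtom (rotM ψj) (sclM sxj syj) τj X * gAtom (rotM ψk) (sclM sxk syk) τk X)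
      = (π * |((sclM sxj syj) * (sclM sxk syk)).det| / (2 * Real.sqrt Sjk.det)) *
          Real.exp (-(1/2 : ℝ) * ((τk - τj) ⬝ᵥ Sjk⁻¹.mulVec (τk - τj))) := by
  have hxj' : sxj ≠ 0 := ne_of_gt hxj
  have hyj' : syj ≠ 0 := ne_of_gt hyj
  have hxk' : sxk ≠ 0 := ne_of_gt hxk
  have hyk' : syk ≠ 0 := ne_of_gt hyk
  set aj : ℝ := Real.cos ψj ^ 2 / sxj ^ 2 + Real.sin ψj ^ 2 / syj ^ 2 with haj_def
  set bj : ℝ := Real.cos ψj * Real.sin ψj * (1 / sxj ^ 2 - 1 / syj ^ 2) with hbj_def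
  set cj : ℝ := Real.sin ψj ^ 2 / sxj ^ 2 + Real.cos ψj ^ 2 / syj ^ 2 with hcj_def
  set ak : ℝ := Real.cos ψk ^ 2 / sxk ^ 2 + Real.sin ψk ^ 2 / syk ^ 2 with hak_def
  set bk : ℝ := Real.cos ψk * Real.sin ψk * (1 / sxk ^ 2 - 1 / syk ^ 2) with hbk_def
  set ck : ℝ := Real.sin ψk ^ 2 / sxk ^ 2 + Real.cos ψk ^ 2 / syk ^ 2 with hck_def
  have hAj : 0 < aj := by rw [haj_def]; exact apos ψj hxj hyj
  have hAk : 0 < ak := by rw [hak_def]; exact apos ψk hxk hyk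
  have hdj : (aj * cj - bj ^ 2) * (sxj ^ 2 * syj ^ 2) = 1 := by
    rw [haj_def, hbj_def, hcj_def]; exact trig_d ψj hxj' hyj'
  have hdk : (ak * ck - bk ^ 2) * (sxk ^ 2 * syk ^ 2) = 1 := by
    rw [hak_def, hbk_def, hck_def]; exact trig_d ψk hxk' hyk'
  have hwjpos : (0:ℝ) < sxj ^ 2 * syj ^ 2 := by positivity
  have hwkpos : (0:ℝ) < sxk ^ 2 * syk ^ 2 := by positivity
  have hdjpos : 0 < aj * cj - bj ^ 2 := by nlinarith [hdj, hwjpos]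
  have hdkpos : 0 < ak * ck - bk ^ 2 := by nlinarith [hdk, hwkpos]
  have hD : 0 < (aj + ak) * (cj + ck) - (bj + bk) ^ 2 := sumPD hAj hdjpos hAk hdkpos
  -- rewrite integrand
  have hint : ∀ X : Fin 2 → ℝ,
      gAtom (rotM ψj) (sclM sxj syj) τj X * gAtom (rotM ψk) (sclM sxk syk) τk X
      = Real.exp (-((aj + ak) * X 0 ^ 2 + 2 * (bj + bk) * X 0 * X 1 + (cj + ck) * X 1 ^ 2
          + (-2*(aj*τj 0 + bj*τj 1 + ak*τk 0 + bk*τk 1)) * X 0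
          + (-2*(bj*τj 0 + cj*τj 1 + bk*τk 0 + ck*τk 1)) * X 1
          + (aj*(τj 0)^2 + 2*bj*(τj 0)*(τj 1) + cj*(τj 1)^2
              + ak*(τk 0)^2 + 2*bk*(τk 0)*(τk 1) + ck*(τk 1)^2))) := by
    intro X
    rw [gAtom_eq ψj hxj' hyj' τj X, gAtom_eq ψk hxk' hyk' τk X, ← Real.exp_add]
    congr 1
    rw [haj_def, hbj_def, hcj_def, hak_def, hbk_def, hck_def]
    field_simp
    ring
  simp_rw [hint]
  rw [core2D (add_pos hAj hAk) hD]
  -- explicit Sjk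
  have hSm : Sjk = !![(cj * (sxj ^ 2 * syj ^ 2) + ck * (sxk ^ 2 * syk ^ 2)) / 2,
      (-(bj * (sxj ^ 2 * syj ^ 2) + bk * (sxk ^ 2 * syk ^ 2))) / 2;
      (-(bj * (sxj ^ 2 * syj ^ 2) + bk * (sxk ^ 2 * syk ^ 2))) / 2,
      (aj * (sxj ^ 2 * syj ^ 2) + ak * (sxk ^ 2 * syk ^ 2)) / 2] := by
    rw [hS, Sexp]
    ext i j
    fin_cases i <;> fin_cases j <;>
      simp [haj_def, hbj_def, hcj_def, hak_def, hbk_def, hck_def] <;>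
      · field_simp
        ring
  have hdet : Sjk.det = ((cj * (sxj ^ 2 * syj ^ 2) + ck * (sxk ^ 2 * syk ^ 2)) / 2)
      * ((aj * (sxj ^ 2 * syj ^ 2) + ak * (sxk ^ 2 * syk ^ 2)) / 2)
      - ((-(bj * (sxj ^ 2 * syj ^ 2) + bk * (sxk ^ 2 * syk ^ 2))) / 2) ^ 2 := by
    rw [hSm, Matrix.det_fin_two_of]
    ring
  have h1 := galg1 aj bj cj ak bk ck (sxj ^ 2 * syj ^ 2) (sxk ^ 2 * syk ^ 2) hdj hdk
  have hdetpos : 0 < Sjk.det := by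
    rw [hdet]
    have h2 := mul_pos hD (mul_pos hwjpos hwkpos)
    rw [h1] at h2
    linarith
  have hdet' : Sjk.det ≠ 0 := ne_of_gt hdetpos
  -- quadratic form on the RHS
  have hquad : (τk - τj) ⬝ᵥ Sjk⁻¹.mulVec (τk - τj)
      = (((aj * (sxj ^ 2 * syj ^ 2) + ak * (sxk ^ 2 * syk ^ 2)) / 2) * (τk 0 - τj 0) ^ 2
        - 2 * ((-(bj * (sxj ^ 2 * syj ^ 2) + bk * (sxk ^ 2 * syk ^ 2))) / 2)
            * (τk 0 - τj 0) * (τk 1 - τj 1)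
        + ((cj * (sxj ^ 2 * syj ^ 2) + ck * (sxk ^ 2 * syk ^ 2)) / 2) * (τk 1 - τj 1) ^ 2)
      / (((cj * (sxj ^ 2 * syj ^ 2) + ck * (sxk ^ 2 * syk ^ 2)) / 2)
          * ((aj * (sxj ^ 2 * syj ^ 2) + ak * (sxk ^ 2 * syk ^ 2)) / 2)
        - ((-(bj * (sxj ^ 2 * syj ^ 2) + bk * (sxk ^ 2 * syk ^ 2))) / 2) ^ 2) := by
    have hdetne : ((cj * (sxj ^ 2 * syj ^ 2) + ck * (sxk ^ 2 * syk ^ 2)) / 2)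
          * ((aj * (sxj ^ 2 * syj ^ 2) + ak * (sxk ^ 2 * syk ^ 2)) / 2)
        - ((-(bj * (sxj ^ 2 * syj ^ 2) + bk * (sxk ^ 2 * syk ^ 2))) / 2) ^ 2 ≠ 0 := by
      rw [← hdet]; exact hdet'
    rw [hSm, quadgen _ _ _ hdetne]
    simp [Pi.sub_apply]
  -- determinant of the scaling product
  have hdetscl : ((sclM sxj syj) * (sclM sxk syk)).det = (sxj * syj) * (sxk * syk) := by
    rw [Matrix.det_mul, sclM, sclM, Matrix.det_fin_two_of, Matrix.det_fin_two_of]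
    ring
  rw [hdetscl, abs_of_pos (by positivity)]
  -- sqrt relation
  have hsqrt : Real.sqrt ((aj + ak) * (cj + ck) - (bj + bk) ^ 2)
      = 2 * Real.sqrt Sjk.det / ((sxj * syj) * (sxk * syk)) := by
    have hDeq : (aj + ak) * (cj + ck) - (bj + bk) ^ 2
        = 2 ^ 2 * Sjk.det / (((sxj * syj) * (sxk * syk)) ^ 2) := by
      rw [hdet]
      rw [eq_div_iff (by positivity)]
      nlinarith [h1]
    rw [hDeq, Real.sqrt_div (by positivity), Real.sqrt_mul (by positivity),
      Real.sqrt_sq (by norm_num : (0:ℝ) ≤ 2), Real.sqrt_sq (by positivity)]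
  rw [hsqrt, hquad]
  -- final assembly
  have hexp := (galgL aj bj cj ak bk ck (τj 0) (τj 1) (τk 0) (τk 1) (ne_of_gt hD)).trans
    (galgR aj bj cj ak bk ck (sxj ^ 2 * syj ^ 2) (sxk ^ 2 * syk ^ 2)
      (τk 0 - τj 0) (τk 1 - τj 1) hdj hdk (ne_of_gt hD)).symm
  rw [hexp]
  have hsq : Real.sqrt Sjk.det ≠ 0 := by positivity
  rw [div_div_eq_mul_div]
end

section
/- Suppose f, h : ℝ² → ℝ are twice continuously differentiable, f has its global minimum at 0 with ∇f(0)=0, and g = f + h has a global minimum at t₀T₀ with t₀ ≥ 0 and T₀ ∈ S¹. Then there exist t₁, t₂ ∈ [0, t₀] such that (t₀²/2)·( f''(t₁T₀; T₀) + f''(t₂T₀; T₀) + h''(t₁T₀; T₀) ) = |h(0) - h(t₀T₀)|, where f''(x; T) denotes the second directional derivative of f along direction T at point x. -/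
open MeasureTheory

private lemma iterWithin_eq_iter {f : ℝ → ℝ} {a b x : ℝ} (hx : x ∈ Set.Ioo a b) (n : ℕ) :
    iteratedDerivWithin n f (Set.Icc a b) x = iteratedDeriv n f x := by
  have h1 : Set.Icc a b ∩ Set.Ioo a b = Set.Ioo a b :=
    Set.inter_eq_self_of_subset_right Set.Ioo_subset_Icc_self
  rw [iteratedDerivWithin_eq_iteratedFDerivWithin, iteratedDeriv_eq_iteratedFDeriv,
    ← iteratedFDerivWithin_inter_open isOpen_Ioo hx, h1,
    iteratedFDerivWithin_of_isOpen n isOpen_Ioo hx]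

private lemma taylor2 {F : ℝ → ℝ} {t₀ : ℝ} (ht : 0 < t₀) (hF : ContDiff ℝ 2 F)
    (hd : deriv F 0 = 0) :
    ∃ x ∈ Set.Ioo 0 t₀, F t₀ - F 0 = iteratedDeriv 2 F x * t₀ ^ 2 / 2 := by
  have hud : UniqueDiffOn ℝ (Set.Icc (0:ℝ) t₀) := uniqueDiffOn_Icc ht
  have hF1 : ContDiffOn ℝ 1 F (Set.Icc 0 t₀) := (hF.of_le one_le_two).contDiffOn
  have hF' : DifferentiableOn ℝ (iteratedDerivWithin 1 F (Set.Icc 0 t₀)) (Set.Ioo 0 t₀) :=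
    (hF.contDiffOn.differentiableOn_iteratedDerivWithin (by norm_num) hud).mono
      Set.Ioo_subset_Icc_self
  obtain ⟨x, hx, hT⟩ := taylor_mean_remainder_lagrange (n := 1) ht.ne
    (by rw [Set.uIcc_of_le ht.le]; exact hF1)
    (by rw [Set.uIcc_of_le ht.le, Set.uIoo_of_le ht.le]; exact hF')
  rw [Set.uIoo_of_le ht.le] at hx
  rw [Set.uIcc_of_le ht.le] at hT
  refine ⟨x, hx, ?_⟩
  have h0 : (0:ℝ) ∈ Set.Icc (0:ℝ) t₀ := Set.left_mem_Icc.mpr ht.le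
  have hder : derivWithin F (Set.Icc 0 t₀) 0 = 0 := by
    rw [(hF.differentiable two_ne_zero 0).derivWithin (hud 0 h0), hd]
  rw [taylorWithinEval_succ, taylor_within_zero_eval, iteratedDerivWithin_one,
    hder] at hT
  rw [iterWithin_eq_iter hx 2] at hT
  simp only [smul_zero, add_zero, sub_zero] at hT
  rw [hT]
  norm_num [Nat.factorial]

/-- Taylor identity for the perturbed global minimum (Eq. (4.6) of the paper):
there exist t₁, t₂ ∈ [0, t₀] with
(t₀²/2)(f''(t₁T₀;T₀) + f''(t₂T₀;T₀) + h''(t₁T₀;T₀)) = |h(0) - h(t₀T₀)|. -/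
theorem stmt7 (f h : EuclideanSpace ℝ (Fin 2) → ℝ)
    (hf : ContDiff ℝ 2 f) (hh : ContDiff ℝ 2 h)
    (hfmin : ∀ x, f 0 ≤ f x) (hgrad0 : gradient f 0 = 0)
    (t₀ : ℝ) (T₀ : EuclideanSpace ℝ (Fin 2)) (ht₀ : 0 ≤ t₀) (hT₀ : ‖T₀‖ = 1)
    (hgmin : ∀ x, f (t₀ • T₀) + h (t₀ • T₀) ≤ f x + h x) :
    ∃ t₁ ∈ Set.Icc (0:ℝ) t₀, ∃ t₂ ∈ Set.Icc (0:ℝ) t₀,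
      (t₀ ^ 2 / 2) *
          (iteratedDeriv 2 (fun s => f (s • T₀)) t₁
            + iteratedDeriv 2 (fun s => f (s • T₀)) t₂
            + iteratedDeriv 2 (fun s => h (s • T₀)) t₁)
        = |h 0 - h (t₀ • T₀)| := by
  rcases eq_or_lt_of_le ht₀ with rfl | ht
  · refine ⟨0, by simp, 0, by simp, by simp⟩
  set F : ℝ → ℝ := fun s => f (s • T₀) with hFdef
  set H : ℝ → ℝ := fun s => h (s • T₀) with hHdef
  set G : ℝ → ℝ := fun s => F s + H s with hGdef
  have hcurve : ContDiff ℝ 2 (fun s : ℝ => s • T₀) := contDiff_id.smul contDiff_const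
  have hF : ContDiff ℝ 2 F := hf.comp hcurve
  have hH : ContDiff ℝ 2 H := hh.comp hcurve
  have hG : ContDiff ℝ 2 G := hF.add hH
  -- derivative of F at 0 is 0
  have hfder0 : fderiv ℝ f 0 = 0 := by
    have := congrArg (InnerProductSpace.toDual ℝ (EuclideanSpace ℝ (Fin 2))) hgrad0
    simpa [gradient] using this
  have hcurve0 : HasDerivAt (fun s : ℝ => s • T₀) T₀ 0 := by
    simpa using (hasDerivAt_id (0:ℝ)).smul_const T₀
  have hF0 : HasDerivAt F (fderiv ℝ f ((0:ℝ) • T₀) T₀) 0 :=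
    (hf.differentiable two_ne_zero ((0:ℝ) • T₀)).hasFDerivAt.comp_hasDerivAt 0 hcurve0
  have hF0' : deriv F 0 = 0 := by
    rw [hF0.deriv]; simp [hfder0]
  -- derivative of G at t₀ is 0
  have hGmin : IsLocalMin G t₀ :=
    Filter.Eventually.of_forall (fun s => hgmin (s • T₀))
  have hGder : deriv G t₀ = 0 := hGmin.deriv_eq_zero
  -- Taylor for F forward
  obtain ⟨t₂, ht₂, hFT⟩ := taylor2 ht hF hF0'
  -- Taylor for reversed G
  set Grev : ℝ → ℝ := fun s => G (t₀ - s) with hGrevdef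
  have hGrev : ContDiff ℝ 2 Grev := hG.comp (contDiff_const.sub contDiff_id)
  have hGrev0 : deriv Grev 0 = 0 := by
    have hinner : HasDerivAt (fun s : ℝ => t₀ - s) (-1) 0 := by
      simpa using (hasDerivAt_id (0:ℝ)).const_sub t₀
    have hGd : HasDerivAt G (deriv G t₀) (t₀ - 0) := by
      simpa using ((hG.differentiable two_ne_zero).differentiableAt (x := t₀)).hasDerivAt
    have h2 : HasDerivAt Grev (deriv G t₀ * -1) 0 := hGd.comp 0 hinner
    rw [h2.deriv, hGder]; ring
  obtain ⟨x₁, hx₁, hGT⟩ := taylor2 ht hGrev hGrev0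
  set t₁ : ℝ := t₀ - x₁ with ht₁def
  have ht₁mem : t₁ ∈ Set.Ioo 0 t₀ := ⟨by simp [ht₁def]; linarith [hx₁.2], by
    simp only [ht₁def]; linarith [hx₁.1]⟩
  -- rewrite iterated derivative of Grev
  have hiter : iteratedDeriv 2 Grev x₁ = iteratedDeriv 2 G t₁ := by
    have h1 : Grev = fun s : ℝ => G (t₀ + (-s)) := by
      funext s; simp [hGrevdef, sub_eq_add_neg]
    calc iteratedDeriv 2 Grev x₁ = iteratedDeriv 2 (fun s : ℝ => G (t₀ + (-s))) x₁ := by rw [h1]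
      _ = ((-1:ℝ)^2) • iteratedDeriv 2 (fun u => G (t₀ + u)) (-x₁) :=
          iteratedDeriv_comp_neg 2 (fun u => G (t₀ + u)) x₁
      _ = iteratedDeriv 2 G t₁ := by
          rw [iteratedDeriv_comp_const_add]
          norm_num [ht₁def, sub_eq_add_neg]
  -- split G'' into F'' + H''
  have hsplit : iteratedDeriv 2 G t₁ = iteratedDeriv 2 F t₁ + iteratedDeriv 2 H t₁ := by
    have : G = F + H := rfl
    rw [this, ← iteratedDerivWithin_univ, ← iteratedDerivWithin_univ (f := F),
      ← iteratedDerivWithin_univ (f := H)]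
    exact iteratedDerivWithin_add (Set.mem_univ t₁) uniqueDiffOn_univ
      hF.contDiffWithinAt hH.contDiffWithinAt
  -- key equations
  have e1 : G 0 - G t₀ = (iteratedDeriv 2 F t₁ + iteratedDeriv 2 H t₁) * t₀ ^ 2 / 2 := by
    have : Grev t₀ - Grev 0 = iteratedDeriv 2 Grev x₁ * t₀ ^ 2 / 2 := hGT
    rw [hiter, hsplit] at this
    simpa [hGrevdef] using this
  have e2 : F t₀ - F 0 = iteratedDeriv 2 F t₂ * t₀ ^ 2 / 2 := hFT
  have hF00 : F 0 = f 0 := by simp [hFdef]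
  have hH00 : H 0 = h 0 := by simp [hHdef]
  have hnn1 : 0 ≤ G 0 - G t₀ := by
    have := hgmin ((0:ℝ) • T₀); simp only [hGdef, hFdef, hHdef] at *; linarith
  have hnn2 : 0 ≤ F t₀ - F 0 := by
    have := hfmin (t₀ • T₀); rw [hF00]; simpa [hFdef] using this
  refine ⟨t₁, Set.Ioo_subset_Icc_self ht₁mem, t₂, Set.Ioo_subset_Icc_self ht₂, ?_⟩
  have habs : |h 0 - h (t₀ • T₀)| = h 0 - h (t₀ • T₀) := by
    apply abs_of_nonneg
    have : h 0 - h (t₀ • T₀) = (G 0 - G t₀) + (F t₀ - F 0) := by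
      simp only [hGdef, hF00, hH00]; simp [hHdef]; ring
    rw [this]; linarith
  rw [habs]
  have hkey : h 0 - h (t₀ • T₀) = (G 0 - G t₀) + (F t₀ - F 0) := by
    simp only [hGdef, hF00, hH00]; simp [hHdef]; ring
  rw [hkey, e1, e2]
  ring
end

section
/- Suppose f : ℝ² → ℝ is twice continuously differentiable with global minimum at 0, h : ℝ² → ℝ is twice continuously differentiable, and g = f + h has global minimum at t₀T₀ with t₀ ≤ t̄₀. Assume: (i) the second directional derivative of f along any unit direction T satisfies f''(tT;T) ≥ r₀ > 0 for all t ∈ [0, t̄₀]; (ii) |h''(tT;T)| ≤ B₂ for all t ∈ [0, t̄₀] and all unit T, with B₂ < r₀; and (iii) |h(0) - h(t₀T₀)| ≤ B₀. Then t₀ ≤ √(2B₀/(r₀ - B₂)). -/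
open MeasureTheory

/-- Deterministic core of Theorems 4.6/4.7: under uniform bounds on the second
directional derivatives of f and h, the perturbation t₀ of the global minimum
satisfies t₀ ≤ √(2B₀/(r₀ - B₂)). -/
theorem stmt8 (f h : EuclideanSpace ℝ (Fin 2) → ℝ)
    (hf : ContDiff ℝ 2 f) (hh : ContDiff ℝ 2 h)
    (hfmin : ∀ x, f 0 ≤ f x)
    (t₀ tb₀ r₀ B₀ B₂ : ℝ) (T₀ : EuclideanSpace ℝ (Fin 2))
    (ht₀ : 0 ≤ t₀) (hT₀ : ‖T₀‖ = 1)
    (hgmin : ∀ x, f (t₀ • T₀) + h (t₀ • T₀) ≤ f x + h x)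
    (htle : t₀ ≤ tb₀) (hr₀ : 0 < r₀)
    (hfdd : ∀ (T : EuclideanSpace ℝ (Fin 2)) (t : ℝ), ‖T‖ = 1 → t ∈ Set.Icc 0 tb₀ →
      r₀ ≤ iteratedDeriv 2 (fun s => f (s • T)) t)
    (hhdd : ∀ (T : EuclideanSpace ℝ (Fin 2)) (t : ℝ), ‖T‖ = 1 → t ∈ Set.Icc 0 tb₀ →
      |iteratedDeriv 2 (fun s => h (s • T)) t| ≤ B₂)
    (hB₂ : B₂ < r₀)
    (hB₀ : |h 0 - h (t₀ • T₀)| ≤ B₀) :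
    t₀ ≤ Real.sqrt (2 * B₀ / (r₀ - B₂)) := by
  have htb : 0 ≤ tb₀ := ht₀.trans htle
  set F : ℝ → ℝ := fun s => f (s • T₀) with hFdef
  have hsmul : ContDiff ℝ 2 (fun s : ℝ => s • T₀) := (contDiff_id.smul contDiff_const)
  have hF : ContDiff ℝ 2 F := hf.comp hsmul
  have hFd : Differentiable ℝ F ∧ ContDiff ℝ 1 (deriv F) := by
    have := contDiff_succ_iff_deriv.mp (show ContDiff ℝ ((1:ℕ)+1) F by exact_mod_cast hF)
    exact ⟨this.1, this.2.2⟩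
  -- F has a global min at 0, so deriv F 0 = 0
  have hF0 : deriv F 0 = 0 := by
    have : IsLocalMin F 0 := by
      apply IsMinOn.isLocalMin
      · intro x _
        simpa [F] using hfmin (x • T₀)
      · exact Filter.univ_mem
    exact this.deriv_eq_zero
  -- second derivative bound
  have hF2 : ∀ t ∈ Set.Icc (0:ℝ) tb₀, r₀ ≤ deriv (deriv F) t := by
    intro t ht
    have := hfdd T₀ t hT₀ ht
    rwa [iteratedDeriv_succ, iteratedDeriv_one] at this
  -- Step 1: deriv F s ≥ r₀ * s on [0, tb₀]
  have step1 : ∀ s ∈ Set.Icc (0:ℝ) tb₀, r₀ * s ≤ deriv F s := by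
    intro s hs
    have hmono : MonotoneOn (fun u => deriv F u - r₀ * u) (Set.Icc 0 tb₀) := by
      apply monotoneOn_of_deriv_nonneg (convex_Icc _ _)
      · exact ((hFd.2.continuous.sub (continuous_const.mul continuous_id)).continuousOn)
      · exact ((hFd.2.differentiable one_ne_zero).sub
          ((differentiable_id.const_mul r₀))).differentiableOn
      · intro x hx
        rw [interior_Icc] at hx
        have hx' : x ∈ Set.Icc (0:ℝ) tb₀ := Set.mem_Icc_of_Ioo hx
        have hd : deriv (fun u => deriv F u - r₀ * u) x
            = deriv (deriv F) x - r₀ := by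
          have h2 : DifferentiableAt ℝ (fun u : ℝ => r₀ * u) x := by fun_prop
          rw [deriv_fun_sub ((hFd.2.differentiable one_ne_zero) x) h2,
            deriv_const_mul _ differentiableAt_id]
          simp
        rw [hd]
        linarith [hF2 x hx']
    have := hmono (Set.left_mem_Icc.2 htb) hs hs.1
    simp only [mul_zero, hF0, sub_zero] at this
    linarith [this]
  -- Step 2: F t₀ - F 0 ≥ r₀ * t₀^2 / 2
  have step2 : r₀ * t₀ ^ 2 / 2 ≤ F t₀ - F 0 := by
    have hmono : MonotoneOn (fun u => F u - r₀ * u ^ 2 / 2) (Set.Icc 0 tb₀) := by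
      apply monotoneOn_of_deriv_nonneg (convex_Icc _ _)
      · exact (hFd.1.continuous.sub (by continuity)).continuousOn
      · exact (hFd.1.sub (by fun_prop)).differentiableOn
      · intro x hx
        rw [interior_Icc] at hx
        have hx' : x ∈ Set.Icc (0:ℝ) tb₀ := Set.mem_Icc_of_Ioo hx
        have hd : deriv (fun u => F u - r₀ * u ^ 2 / 2) x = deriv F x - r₀ * x := by
          have h1 : DifferentiableAt ℝ (fun u : ℝ => r₀ * u ^ 2 / 2) x := by fun_prop
          rw [deriv_fun_sub (hFd.1 x) h1]
          have : deriv (fun u : ℝ => r₀ * u ^ 2 / 2) x = r₀ * x := by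
            have : (fun u : ℝ => r₀ * u ^ 2 / 2) = fun u : ℝ => (r₀ / 2) * u ^ 2 := by
              ext u; ring
            rw [this, deriv_const_mul _ (by fun_prop)]
            simp [deriv_pow]
            ring
          rw [this]
        rw [hd]
        have := step1 x hx'
        linarith
    have := hmono (Set.left_mem_Icc.2 htb) (Set.mem_Icc.2 ⟨ht₀, htle⟩) ht₀
    simp only at this
    nlinarith [this]
  -- chain of inequalities
  have key : F t₀ - F 0 ≤ B₀ := by
    have h1 : F t₀ + h (t₀ • T₀) ≤ F 0 + h 0 := by
      simpa [F] using hgmin ((0:ℝ) • T₀)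
    have h2 : h 0 - h (t₀ • T₀) ≤ B₀ := (le_abs_self _).trans hB₀
    linarith
  have hB₂nn : 0 ≤ B₂ := le_trans (abs_nonneg _) (hhdd T₀ 0 hT₀ (Set.left_mem_Icc.2 htb))
  have hB₀nn : 0 ≤ B₀ := le_trans (abs_nonneg _) hB₀
  have hsq : t₀ ^ 2 ≤ 2 * B₀ / (r₀ - B₂) := by
    rw [le_div_iff₀ (by linarith)]
    nlinarith [step2, key]
  calc t₀ = Real.sqrt (t₀ ^ 2) := by rw [Real.sqrt_sq ht₀]
    _ ≤ _ := Real.sqrt_le_sqrt hsq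
end
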